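/- Let G be a connected bipartite graph on vertex set V with bipartition V1 ∋ 0 and V2, let c ∈ R^E, and let P_{G,c} = {u ∈ R^V : -u(a)+u(b) ≤ c(ab) for all edges ab with a ∈ V1, b ∈ V2, u(0) = 0}, assumed generic so that every vertex of P_{G,c} corresponds to a spanning tree of tight edges. Then the circuit diameter of P_{G,c} is at most |V| - 1. -/

import Mathlib

/-- The dual transportation polyhedron on a bipartite graph G with parts V1, V2,
costs c, and distinguished node z (normalized by u(z) = 0). -/
def dualTransportPoly {V : Type*} (G : SimpleGraph V) (V1 V2 : Set V) (z : V)
    (c : V → V → ℝ) : Set (V → ℝ) :=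
  {u | (∀ a b, a ∈ V1 → b ∈ V2 → G.Adj a b → -u a + u b ≤ c a b) ∧ u z = 0}

/-- The circuits of the dual transportation polyhedron: signed indicator vectors
of partitions V = R ∪ S into nonempty sets inducing connected subgraphs of G
with z ∈ R. -/
def dualTransportCircuits {V : Type*} (G : SimpleGraph V) (z : V) :
    Set (V → ℝ) :=
  {g | ∃ R S : Set V, R.Nonempty ∧ S.Nonempty ∧ Disjoint R S ∧
    R ∪ S = Set.univ ∧ z ∈ R ∧
    (G.induce R).Connected ∧ (G.induce S).Connected ∧
    (((∀ i ∈ R, g i = 0) ∧ (∀ i ∈ S, g i = 1)) ∨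
     ((∀ i ∈ R, g i = 0) ∧ (∀ i ∈ S, g i = -1)))}

/-- A vertex of the (generic) dual transportation polyhedron: a feasible point
whose tight edges form a spanning tree of G. -/
def IsDTVertex {V : Type*} (G : SimpleGraph V) (V1 V2 : Set V) (z : V)
    (c : V → V → ℝ) (u : V → ℝ) : Prop :=
  u ∈ dualTransportPoly G V1 V2 z c ∧
  ∃ T : SimpleGraph V, T ≤ G ∧ T.Connected ∧ T.IsAcyclic ∧
    ∀ a b, a ∈ V1 → b ∈ V2 → G.Adj a b → (-u a + u b = c a b ↔ T.Adj a b)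

/-- A circuit walk of length k from v to w: feasible points, each step a
positive multiple of a circuit taken with maximal feasible length. -/
def IsDTCircuitWalk {V : Type*} (G : SimpleGraph V) (V1 V2 : Set V) (z : V)
    (c : V → V → ℝ) (k : ℕ) (y : ℕ → V → ℝ) (v w : V → ℝ) : Prop :=
  y 0 = v ∧ y k = w ∧ (∀ i ≤ k, y i ∈ dualTransportPoly G V1 V2 z c) ∧
  ∀ i < k, ∃ g ∈ dualTransportCircuits G z, ∃ α : ℝ, 0 < α ∧
    y (i + 1) = y i + α • g ∧
    ∀ β : ℝ, α < β → y i + β • g ∉ dualTransportPoly G V1 V2 z c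

def dtStep {V : Type*} (G : SimpleGraph V) (K : Set V) : V → V → Prop :=
  fun u w => G.Adj u w ∧ u ∉ K ∧ w ∉ K

def dtReach {V : Type*} (G : SimpleGraph V) (K : Set V) (z : V) : Set V :=
  {x | Relation.ReflTransGen (dtStep G K) z x}

lemma dtReach_self {V : Type*} (G : SimpleGraph V) (K : Set V) (z : V) :
    z ∈ dtReach G K z := Relation.ReflTransGen.refl

lemma dtReach_not_mem_K {V : Type*} {G : SimpleGraph V} {K : Set V} {z : V} (hzK : z ∉ K)
    {x : V} (hx : x ∈ dtReach G K z) : x ∉ K := by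
  rcases Relation.ReflTransGen.cases_tail hx with h | ⟨c, _, hc⟩
  · subst h; exact hzK
  · exact hc.2.2

lemma dtReach_tail {V : Type*} {G : SimpleGraph V} {K : Set V} {z x w : V}
    (hx : x ∈ dtReach G K z) (hadj : G.Adj x w) (hxK : x ∉ K) (hwK : w ∉ K) :
    w ∈ dtReach G K z :=
  Relation.ReflTransGen.tail hx ⟨hadj, hxK, hwK⟩

lemma dtReach_induce_connected {V : Type*} (G : SimpleGraph V) (K : Set V) (z : V) :
    (G.induce (dtReach G K z)).Connected := by
  rw [SimpleGraph.connected_iff]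
  have key : ∀ (x : V) (hx : x ∈ dtReach G K z),
      (G.induce (dtReach G K z)).Reachable ⟨z, dtReach_self G K z⟩ ⟨x, hx⟩ := by
    intro x hx
    induction hx with
    | refl => exact SimpleGraph.Reachable.refl _
    | @tail b c hzb hbc ih =>
        have hadj : (G.induce (dtReach G K z)).Adj ⟨b, hzb⟩
            ⟨c, Relation.ReflTransGen.tail hzb hbc⟩ := by simp [hbc.1]
        exact ih.trans hadj.reachable
  refine ⟨fun x y => ?_, ⟨⟨z, dtReach_self G K z⟩⟩⟩
  exact (key x.1 x.2).symm.trans (key y.1 y.2)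

lemma dtReachCompl_connected {V : Type*} {G : SimpleGraph V} (hG : G.Connected)
    {K : Set V} {z v : V} (hzK : z ∉ K) (hvK : v ∈ K)
    (hKadj : ∀ x ∈ K, x = v ∨ G.Adj x v) :
    (G.induce (dtReach G K z)ᶜ).Connected := by
  have hvS : v ∈ (dtReach G K z)ᶜ := fun h => (dtReach_not_mem_K hzK h) hvK
  have key : ∀ (x t : V) (W : G.Walk x t), t ∈ dtReach G K z → ∀ (hx : x ∈ (dtReach G K z)ᶜ),
      (G.induce (dtReach G K z)ᶜ).Reachable ⟨x, hx⟩ ⟨v, hvS⟩ := by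
    intro x t W
    induction W with
    | nil => intro ht hx; exact absurd ht hx
    | @cons a b _ h W ih =>
        intro ht hx
        by_cases hb : b ∈ (dtReach G K z)ᶜ
        · have hadj : (G.induce (dtReach G K z)ᶜ).Adj ⟨a, hx⟩ ⟨b, hb⟩ := by simp [h]
          exact hadj.reachable.trans (ih ht hb)
        · have hbR : b ∈ dtReach G K z := not_not.mp hb
          by_cases haK : a ∈ K
          · rcases hKadj a haK with rfl | hadj
            · exact SimpleGraph.Reachable.refl _
            · have hadj' : (G.induce (dtReach G K z)ᶜ).Adj ⟨a, hx⟩ ⟨v, hvS⟩ := by simp [hadj]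
              exact hadj'.reachable
          · exact absurd (dtReach_tail hbR h.symm (dtReach_not_mem_K hzK hbR) haK) hx
  rw [SimpleGraph.connected_iff]
  refine ⟨fun x y => ?_, ⟨⟨v, hvS⟩⟩⟩
  obtain ⟨Wx⟩ := hG.preconnected x.1 z
  obtain ⟨Wy⟩ := hG.preconnected y.1 z
  exact (key x.1 z Wx (dtReach_self G K z) x.2).trans (key y.1 z Wy (dtReach_self G K z) y.2).symm

set_option maxHeartbeats 1000000 in
lemma dtStepLemma {V : Type*} (G : SimpleGraph V) (V1 V2 : Set V) (z : V)
    (hdisj : Disjoint V1 V2)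
    (hbip : ∀ a b, G.Adj a b → (a ∈ V1 ∧ b ∈ V2) ∨ (a ∈ V2 ∧ b ∈ V1))
    (hGconn : G.Connected) (c : V → V → ℝ) (u2 : V → ℝ)
    (hu2P : u2 ∈ dualTransportPoly G V1 V2 z c)
    (T2 : SimpleGraph V) (hT2le : T2 ≤ G)
    (htight : ∀ a b, a ∈ V1 → b ∈ V2 → G.Adj a b → (-u2 a + u2 b = c a b ↔ T2.Adj a b))
    (A : Set V) (y0 : V → ℝ) (hy0 : y0 ∈ dualTransportPoly G V1 V2 z c) (hzA : z ∈ A)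
    (hagree : ∀ x ∈ A, y0 x = u2 x)
    (hconn : ∀ x ∈ A, Relation.ReflTransGen (fun a b => G.Adj a b ∧ a ∈ A ∧ b ∈ A) z x)
    (v p : V) (hpA : p ∈ A) (hvA : v ∉ A) (hpv : T2.Adj p v) (hne : y0 v ≠ u2 v) :
    ∃ g ∈ dualTransportCircuits G z, ∃ α : ℝ, 0 < α ∧
      (y0 + α • g) ∈ dualTransportPoly G V1 V2 z c ∧
      (∀ x ∈ A, (y0 + α • g) x = u2 x) ∧ (y0 + α • g) v = u2 v ∧
      (∀ β : ℝ, α < β → y0 + β • g ∉ dualTransportPoly G V1 V2 z c) := by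
  classical
  have hGpv : G.Adj p v := hT2le hpv
  have hyp : y0 p = u2 p := hagree p hpA
  rcases hbip p v hGpv with ⟨hp1, hv2⟩ | ⟨hp2, hv1⟩
  · -- Case 1 : p ∈ V1, v ∈ V2, raise on S
    set τ : ℝ := u2 v - y0 v with hτdef
    have hceq : c p v = -u2 p + u2 v := ((htight p v hp1 hv2 hGpv).mpr hpv).symm
    have hfeas : -y0 p + y0 v ≤ c p v := hy0.1 p v hp1 hv2 hGpv
    have hτ : 0 < τ := by
      rcases lt_or_eq_of_le (show y0 v ≤ u2 v by rw [hceq, hyp] at hfeas; linarith) with h | h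
      · simp [hτdef]; linarith
      · exact absurd h hne
    set K : Set V := {v} ∪ {a | a ∈ V1 ∧ G.Adj a v ∧ c a v + y0 a - y0 v < τ} with hKdef
    have hAK : ∀ x ∈ A, x ∉ K := by
      intro x hxA hxK
      rcases hxK with hxv | ⟨hx1, hxadj, hlt⟩
      · rw [Set.mem_singleton_iff] at hxv; exact hvA (hxv ▸ hxA)
      · have hs := hu2P.1 x v hx1 hv2 hxadj
        have hagx := hagree x hxA
        rw [hτdef] at hlt; linarith
    have hzK : z ∉ K := hAK z hzA
    set R := dtReach G K z with hRdef
    have hRK : ∀ x ∈ R, x ∉ K := fun x hx => dtReach_not_mem_K hzK hx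
    have hAR : ∀ x ∈ A, x ∈ R := fun x hxA =>
      Relation.ReflTransGen.mono (fun a b hab => ⟨hab.1, hAK a hab.2.1, hAK b hab.2.2⟩) _ _
        (hconn x hxA)
    have hvK : v ∈ K := Or.inl rfl
    have hvS : v ∈ Rᶜ := fun h => hRK v h hvK
    have hKadj : ∀ x ∈ K, x = v ∨ G.Adj x v := by
      rintro x (hx | ⟨_, hadj, _⟩)
      · exact Or.inl (Set.mem_singleton_iff.mp hx)
      · exact Or.inr hadj
    set g : V → ℝ := fun i => if i ∈ R then 0 else 1 with hgdef
    have hgR : ∀ i, i ∈ R → g i = 0 := fun i hi => if_pos hi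
    have hgS : ∀ i, i ∉ R → g i = 1 := fun i hi => if_neg hi
    have hgcirc : g ∈ dualTransportCircuits G z :=
      ⟨R, Rᶜ, ⟨z, dtReach_self G K z⟩, ⟨v, hvS⟩, disjoint_compl_right,
        Set.union_compl_self R, dtReach_self G K z,
        dtReach_induce_connected G K z, dtReachCompl_connected hGconn hzK hvK hKadj,
        Or.inl ⟨hgR, fun i hi => hgS i hi⟩⟩
    have hval : ∀ (t : ℝ) (x : V), (y0 + t • g) x = y0 x + t * g x := fun t x => by
      simp [Pi.add_apply, Pi.smul_apply, smul_eq_mul]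
    refine ⟨g, hgcirc, τ, hτ, ⟨?_, ?_⟩, ?_, ?_, ?_⟩
    · -- feasibility
      intro a b ha hb hab
      have hbase := hy0.1 a b ha hb hab
      rw [hval, hval]
      by_cases haR : a ∈ R <;> by_cases hbR : b ∈ R
      · rw [hgR a haR, hgR b hbR]; linarith
      · rw [hgR a haR, hgS b hbR]
        by_cases hbv : b = v
        · subst hbv
          have haK : a ∉ K := hRK a haR
          have hnlt : ¬ (c a b + y0 a - y0 b < τ) := fun hlt => haK (Or.inr ⟨ha, hab, hlt⟩)
          rw [not_lt] at hnlt; linarith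
        · exfalso
          apply hbR
          refine dtReach_tail haR hab (hRK a haR) ?_
          rintro (hb1 | ⟨hb1, _, _⟩)
          · exact hbv (Set.mem_singleton_iff.mp hb1)
          · exact (Set.disjoint_left.mp hdisj hb1) hb
      · rw [hgS a haR, hgR b hbR]; linarith
      · rw [hgS a haR, hgS b hbR]; linarith
    · -- normalization at z
      rw [hval, hgR z (dtReach_self G K z)]
      have := hy0.2; simp [this]
    · -- agreement on A
      intro x hxA
      rw [hval, hgR x (hAR x hxA)]
      simp [hagree x hxA]
    · -- new agreement at v
      rw [hval, hgS v hvS, hτdef]; ring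
    · -- maximality
      intro β hβ hmem
      have h2 := hmem.1 p v hp1 hv2 hGpv
      rw [hval, hval, hgR p (hAR p hpA), hgS v hvS] at h2
      rw [hceq, hyp] at h2
      rw [hτdef] at hβ
      linarith
  · -- Case 2 : p ∈ V2, v ∈ V1, lower on S
    set τ : ℝ := y0 v - u2 v with hτdef
    have hGvp : G.Adj v p := hGpv.symm
    have hceq : c v p = -u2 v + u2 p := ((htight v p hv1 hp2 hGvp).mpr hpv.symm).symm
    have hfeas : -y0 v + y0 p ≤ c v p := hy0.1 v p hv1 hp2 hGvp
    have hτ : 0 < τ := by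
      rcases lt_or_eq_of_le (show u2 v ≤ y0 v by rw [hceq, hyp] at hfeas; linarith) with h | h
      · simp [hτdef]; linarith
      · exact absurd h.symm hne
    set K : Set V := {v} ∪ {b | b ∈ V2 ∧ G.Adj v b ∧ c v b + y0 v - y0 b < τ} with hKdef
    have hAK : ∀ x ∈ A, x ∉ K := by
      intro x hxA hxK
      rcases hxK with hxv | ⟨hx2, hxadj, hlt⟩
      · rw [Set.mem_singleton_iff] at hxv; exact hvA (hxv ▸ hxA)
      · have hs := hu2P.1 v x hv1 hx2 hxadj
        have hagx := hagree x hxA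
        rw [hτdef] at hlt; linarith
    have hzK : z ∉ K := hAK z hzA
    set R := dtReach G K z with hRdef
    have hRK : ∀ x ∈ R, x ∉ K := fun x hx => dtReach_not_mem_K hzK hx
    have hAR : ∀ x ∈ A, x ∈ R := fun x hxA =>
      Relation.ReflTransGen.mono (fun a b hab => ⟨hab.1, hAK a hab.2.1, hAK b hab.2.2⟩) _ _
        (hconn x hxA)
    have hvK : v ∈ K := Or.inl rfl
    have hvS : v ∈ Rᶜ := fun h => hRK v h hvK
    have hKadj : ∀ x ∈ K, x = v ∨ G.Adj x v := by
      rintro x (hx | ⟨_, hadj, _⟩)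
      · exact Or.inl (Set.mem_singleton_iff.mp hx)
      · exact Or.inr hadj.symm
    set g : V → ℝ := fun i => if i ∈ R then 0 else -1 with hgdef
    have hgR : ∀ i, i ∈ R → g i = 0 := fun i hi => if_pos hi
    have hgS : ∀ i, i ∉ R → g i = -1 := fun i hi => if_neg hi
    have hgcirc : g ∈ dualTransportCircuits G z :=
      ⟨R, Rᶜ, ⟨z, dtReach_self G K z⟩, ⟨v, hvS⟩, disjoint_compl_right,
        Set.union_compl_self R, dtReach_self G K z,
        dtReach_induce_connected G K z, dtReachCompl_connected hGconn hzK hvK hKadj,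
        Or.inr ⟨hgR, fun i hi => hgS i hi⟩⟩
    have hval : ∀ (t : ℝ) (x : V), (y0 + t • g) x = y0 x + t * g x := fun t x => by
      simp [Pi.add_apply, Pi.smul_apply, smul_eq_mul]
    refine ⟨g, hgcirc, τ, hτ, ⟨?_, ?_⟩, ?_, ?_, ?_⟩
    · intro a b ha hb hab
      have hbase := hy0.1 a b ha hb hab
      rw [hval, hval]
      by_cases haR : a ∈ R <;> by_cases hbR : b ∈ R
      · rw [hgR a haR, hgR b hbR]; linarith
      · rw [hgR a haR, hgS b hbR]; linarith
      · rw [hgS a haR, hgR b hbR]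
        by_cases hav : a = v
        · subst hav
          have hbK : b ∉ K := hRK b hbR
          have hnlt : ¬ (c a b + y0 a - y0 b < τ) := fun hlt => hbK (Or.inr ⟨hb, hab, hlt⟩)
          rw [not_lt] at hnlt; linarith
        · exfalso
          apply haR
          refine dtReach_tail hbR hab.symm (hRK b hbR) ?_
          rintro (ha1 | ⟨ha2, _, _⟩)
          · exact hav (Set.mem_singleton_iff.mp ha1)
          · exact (Set.disjoint_left.mp hdisj ha) ha2
      · rw [hgS a haR, hgS b hbR]; linarith
    · rw [hval, hgR z (dtReach_self G K z)]
      have := hy0.2; simp [this]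
    · intro x hxA
      rw [hval, hgR x (hAR x hxA)]
      simp [hagree x hxA]
    · rw [hval, hgS v hvS, hτdef]; ring
    · intro β hβ hmem
      have h2 := hmem.1 v p hv1 hp2 hGvp
      rw [hval, hval, hgR p (hAR p hpA), hgS v hvS] at h2
      rw [hceq] at h2
      rw [hyp] at h2
      rw [hτdef] at hβ
      linarith

lemma dtBoundary {V : Type*} {T2 : SimpleGraph V} (hT2conn : T2.Connected) (A : Set V)
    {z x0 : V} (hzA : z ∈ A) (hx0 : x0 ∉ A) : ∃ p ∈ A, ∃ v, v ∉ A ∧ T2.Adj p v := by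
  obtain ⟨W⟩ := hT2conn.preconnected z x0
  have key : ∀ (s t : V) (_ : T2.Walk s t), s ∈ A → t ∉ A →
      ∃ p ∈ A, ∃ v, v ∉ A ∧ T2.Adj p v := by
    intro s t W
    induction W with
    | nil => intro hs ht; exact absurd hs ht
    | @cons a b _ h W ih =>
        intro hs ht
        by_cases hb : b ∈ A
        · exact ih hb ht
        · exact ⟨a, hs, b, hb, h⟩
  exact key z x0 W hzA hx0

lemma dtWalkRec {V : Type*} [Fintype V] [DecidableEq V] (G : SimpleGraph V) (V1 V2 : Set V)
    (z : V) (hdisj : Disjoint V1 V2)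
    (hbip : ∀ a b, G.Adj a b → (a ∈ V1 ∧ b ∈ V2) ∨ (a ∈ V2 ∧ b ∈ V1))
    (hGconn : G.Connected) (c : V → V → ℝ) (u2 : V → ℝ)
    (hu2P : u2 ∈ dualTransportPoly G V1 V2 z c)
    (T2 : SimpleGraph V) (hT2le : T2 ≤ G) (hT2conn : T2.Connected)
    (htight : ∀ a b, a ∈ V1 → b ∈ V2 → G.Adj a b → (-u2 a + u2 b = c a b ↔ T2.Adj a b)) :
    ∀ (m : ℕ) (A : Finset V) (y0 : V → ℝ), Aᶜ.card ≤ m →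
      y0 ∈ dualTransportPoly G V1 V2 z c → z ∈ A →
      (∀ x ∈ A, y0 x = u2 x) →
      (∀ x ∈ A, Relation.ReflTransGen (fun a b => G.Adj a b ∧ a ∈ A ∧ b ∈ A) z x) →
      ∃ k ≤ Aᶜ.card, ∃ y : ℕ → V → ℝ, IsDTCircuitWalk G V1 V2 z c k y y0 u2 := by
  intro m
  induction m with
  | zero =>
      intro A y0 hcard hy0 hzA hagree hconn
      have hA : ∀ x, x ∈ A := by
        intro x
        by_contra hx
        have hmem : x ∈ Aᶜ := Finset.mem_compl.mpr hx
        have := Finset.card_pos.mpr ⟨x, hmem⟩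
        omega
      have heq : y0 = u2 := funext fun x => hagree x (hA x)
      exact ⟨0, Nat.zero_le _, fun _ => y0, rfl, heq, fun i _ => hy0,
        fun i hi => absurd hi (Nat.not_lt_zero i)⟩
  | succ m ih =>
      intro A y0 hcard hy0 hzA hagree hconn
      by_cases hdone : y0 = u2
      · exact ⟨0, Nat.zero_le _, fun _ => y0, rfl, hdone, fun i _ => hy0,
          fun i hi => absurd hi (Nat.not_lt_zero i)⟩
      · have hex : ∃ x, x ∉ A := by
          by_contra hall; push_neg at hall
          exact hdone (funext fun x => hagree x (hall x))
        obtain ⟨x0, hx0⟩ := hex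
        obtain ⟨p, hpA, v, hvA, hpv⟩ := dtBoundary hT2conn (↑A : Set V)
          (by simpa using hzA) (by simpa using hx0)
        have hpA' : p ∈ A := by simpa using hpA
        have hvA' : v ∉ A := by simpa using hvA
        have hGpv : G.Adj p v := hT2le hpv
        have hvAc : v ∈ Aᶜ := Finset.mem_compl.mpr hvA'
        have hcard' : ((insert v A)ᶜ).card ≤ m := by
          rw [Finset.compl_insert, Finset.card_erase_of_mem hvAc]
          have h1 : 1 ≤ Aᶜ.card := Finset.card_pos.mpr ⟨v, hvAc⟩
          omega
        have hconn' : ∀ x ∈ insert v A, Relation.ReflTransGen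
            (fun a b => G.Adj a b ∧ a ∈ insert v A ∧ b ∈ insert v A) z x := by
          have mono : ∀ {x}, Relation.ReflTransGen
              (fun a b => G.Adj a b ∧ a ∈ A ∧ b ∈ A) z x → Relation.ReflTransGen
              (fun a b => G.Adj a b ∧ a ∈ insert v A ∧ b ∈ insert v A) z x :=
            fun h => Relation.ReflTransGen.mono
              (fun a b hab => ⟨hab.1, Finset.mem_insert_of_mem hab.2.1,
                Finset.mem_insert_of_mem hab.2.2⟩) _ _ h
          intro x hx
          rcases Finset.mem_insert.mp hx with rfl | hxA
          · exact Relation.ReflTransGen.tail (mono (hconn p hpA'))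
              ⟨hGpv, Finset.mem_insert_of_mem hpA', Finset.mem_insert_self x A⟩
          · exact mono (hconn x hxA)
        by_cases hvag : y0 v = u2 v
        · have hagree' : ∀ x ∈ insert v A, y0 x = u2 x := by
            intro x hx
            rcases Finset.mem_insert.mp hx with rfl | hxA
            · exact hvag
            · exact hagree x hxA
          obtain ⟨k, hk, y, hw⟩ := ih (insert v A) y0 hcard' hy0
            (Finset.mem_insert_of_mem hzA) hagree' hconn'
          refine ⟨k, le_trans hk ?_, y, hw⟩
          rw [Finset.compl_insert]
          exact Finset.card_erase_le
        · have hconnS : ∀ x ∈ (↑A : Set V), Relation.ReflTransGen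
              (fun a b => G.Adj a b ∧ a ∈ (↑A : Set V) ∧ b ∈ (↑A : Set V)) z x :=
            fun x hx => Relation.ReflTransGen.mono
              (fun a b hab => ⟨hab.1, by simpa using hab.2.1, by simpa using hab.2.2⟩) _ _
              (hconn x (by simpa using hx))
          obtain ⟨g, hgcirc, α, hα, hy1P, hy1A, hy1v, hmax⟩ :=
            dtStepLemma G V1 V2 z hdisj hbip hGconn c u2 hu2P T2 hT2le htight
              (↑A : Set V) y0 hy0 (by simpa using hzA)
              (fun x hx => hagree x (by simpa using hx)) hconnS
              v p (by simpa using hpA') (by simpa using hvA') hpv hvag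
          have hagree1 : ∀ x ∈ insert v A, (y0 + α • g) x = u2 x := by
            intro x hx
            rcases Finset.mem_insert.mp hx with rfl | hxA
            · exact hy1v
            · exact hy1A x (by simpa using hxA)
          obtain ⟨k, hk, yW, hW0, hWk, hWfeas, hWstep⟩ := ih (insert v A) (y0 + α • g)
            hcard' hy1P (Finset.mem_insert_of_mem hzA) hagree1 hconn'
          refine ⟨k + 1, ?_, fun i => Nat.casesOn i y0 (fun j => yW j), rfl, hWk, ?_, ?_⟩
          · have h1 : 1 ≤ Aᶜ.card := Finset.card_pos.mpr ⟨v, hvAc⟩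
            have h2 : ((insert v A)ᶜ).card = Aᶜ.card - 1 := by
              rw [Finset.compl_insert, Finset.card_erase_of_mem hvAc]
            omega
          · intro i hi
            cases i with
            | zero => exact hy0
            | succ j => exact hWfeas j (by omega)
          · intro i hi
            cases i with
            | zero =>
                refine ⟨g, hgcirc, α, hα, ?_, hmax⟩
                show yW 0 = y0 + α • g
                rw [hW0]
            | succ j => exact hWstep j (by omega)


/-- The circuit diameter of a generic dual transportation polyhedron on a
connected bipartite graph G is at most |V| - 1. -/
theorem stmt_11 {V : Type*} [Fintype V] (G : SimpleGraph V)
    (V1 V2 : Set V) (z : V) (hz : z ∈ V1)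
    (hpart : V1 ∪ V2 = Set.univ) (hdisj : Disjoint V1 V2)
    (hbip : ∀ a b, G.Adj a b → (a ∈ V1 ∧ b ∈ V2) ∨ (a ∈ V2 ∧ b ∈ V1))
    (hGconn : G.Connected)
    (c : V → V → ℝ)
    (u1 u2 : V → ℝ)
    (hu1 : IsDTVertex G V1 V2 z c u1) (hu2 : IsDTVertex G V1 V2 z c u2) :
    ∃ k ≤ Fintype.card V - 1, ∃ y : ℕ → V → ℝ,
      IsDTCircuitWalk G V1 V2 z c k y u1 u2 := by
  classical
  obtain ⟨T2, hT2le, hT2conn, _, htight⟩ := hu2.2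
  obtain ⟨k, hk, y, hw⟩ := dtWalkRec G V1 V2 z hdisj hbip hGconn c u2 hu2.1 T2 hT2le hT2conn
    htight (Fintype.card V) ({z} : Finset V) u1
    (Finset.card_le_univ _)
    hu1.1 (Finset.mem_singleton_self z)
    (by
      intro x hx
      rw [Finset.mem_singleton] at hx
      subst hx
      rw [hu1.1.2, hu2.1.2])
    (by
      intro x hx
      rw [Finset.mem_singleton] at hx
      subst hx
      exact Relation.ReflTransGen.refl)
  refine ⟨k, ?_, y, hw⟩
  have hcc : ({z} : Finset V)ᶜ.card = Fintype.card V - 1 := by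
    rw [Finset.card_compl, Finset.card_singleton]
  omega
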